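/- arXiv:2405.12517 — 4 statements merged into one kernel-verified Lean document; each statement's English description precedes it below -/
import Mathlib

section
/- Let k ≥ 2 be a natural number and λ a real number with λ > 1. Let A be a k×k matrix with real entries, and assume there exists an invertible k×k complex matrix U such that U·A·U⁻¹ is the diagonal matrix diag(λ, λ⁻¹, c₃, …, c_k), where c₃, …, c_k are complex numbers of absolute value 1. Then for every vector u ∈ ℝᵏ there exist real constants δ > 1 and C > 0 such that for all n ≥ 1, ‖λ⁻⁽ⁿ⁺¹⁾·Aⁿ⁺¹·u − λ⁻ⁿ·Aⁿ·u‖ ≤ C/δⁿ, where ‖·‖ denotes the Euclidean norm on ℝᵏ. -/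
set_option autoImplicit false

open Matrix Filter Topology

/-- **Lemma 5.5 (quantitative part).** If a real `k × k` matrix `A` is diagonalizable over `ℂ`
with diagonal entries `λ, λ⁻¹, c₃, …, c_k` where `λ > 1` and `|cᵢ| = 1`, then for every
`u ∈ ℝᵏ` the consecutive differences of `λ⁻ⁿ Aⁿ u` decay geometrically in Euclidean norm. -/
theorem stmt1 (k : ℕ) (hk : 2 ≤ k) (lam : ℝ) (hlam : 1 < lam)
    (A : Matrix (Fin k) (Fin k) ℝ)
    (hdiag : ∃ (U : Matrix (Fin k) (Fin k) ℂ) (d : Fin k → ℂ), IsUnit U ∧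
      U * A.map (fun x => (x : ℂ)) * U⁻¹ = Matrix.diagonal d ∧
      d ⟨0, by omega⟩ = (lam : ℂ) ∧ d ⟨1, by omega⟩ = ((lam : ℂ))⁻¹ ∧
      ∀ i : Fin k, 2 ≤ (i : ℕ) → ‖d i‖ = 1) :
    ∀ u : Fin k → ℝ, ∃ δ : ℝ, 1 < δ ∧ ∃ C : ℝ, 0 < C ∧ ∀ n : ℕ, 1 ≤ n →
      ‖(EuclideanSpace.equiv (Fin k) ℝ).symm
          ((lam ^ (n + 1))⁻¹ • (A ^ (n + 1)).mulVec u - (lam ^ n)⁻¹ • (A ^ n).mulVec u)‖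
        ≤ C / δ ^ n := by
  obtain ⟨U, d, hU, hconj, hd0, hd1, hd2⟩ := hdiag
  intro u
  have hlam0 : (0:ℝ) < lam := lt_trans one_pos hlam
  have hlamne : (lam:ℂ) ≠ 0 := by exact_mod_cast hlam0.ne'
  set Ac : Matrix (Fin k) (Fin k) ℂ := A.map (fun x => (x : ℂ)) with hAcdef
  have hdet : IsUnit U.det := (Matrix.isUnit_iff_isUnit_det U).mp hU
  have hUU : U⁻¹ * U = 1 := Matrix.nonsing_inv_mul U hdet
  have hUU' : U * U⁻¹ = 1 := Matrix.mul_nonsing_inv U hdet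
  have hA : Ac = U⁻¹ * Matrix.diagonal d * U := by
    have h1 : U⁻¹ * (U * Ac * U⁻¹) * U = Ac := by
      rw [Matrix.mul_assoc U Ac U⁻¹, ← Matrix.mul_assoc U⁻¹ U (Ac * U⁻¹), hUU, Matrix.one_mul,
        Matrix.mul_assoc Ac U⁻¹ U, hUU, Matrix.mul_one]
    rw [← h1, hconj]
  -- powers of Ac
  have hpow : ∀ n : ℕ, Ac ^ n = U⁻¹ * Matrix.diagonal (fun l => d l ^ n) * U := by
    intro n
    induction n with
    | zero =>
        have : (fun l : Fin k => d l ^ 0) = fun _ => (1:ℂ) := by funext l; simp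
        simp [this, Matrix.diagonal_one, hUU]
    | succ n ih =>
        rw [pow_succ, ih, hA]
        have h2 : (fun l : Fin k => d l ^ (n+1)) = fun l => d l ^ n * d l := by
          funext l; rw [pow_succ]
        rw [h2, ← Matrix.diagonal_mul_diagonal]
        simp only [Matrix.mul_assoc]
        rw [← Matrix.mul_assoc U U⁻¹ (Matrix.diagonal d * U), hUU', Matrix.one_mul]
  -- coercion of powers
  have hmap : ∀ m : ℕ, Ac ^ m = (A ^ m).map (fun x => (x:ℂ)) := by
    intro m
    have h := map_pow (Complex.ofRealHom.mapMatrix :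
      Matrix (Fin k) (Fin k) ℝ →+* Matrix (Fin k) (Fin k) ℂ) A m
    simp only [RingHom.mapMatrix_apply] at h
    exact (h.symm : _)
  -- the diagonal difference entries
  set e : ℕ → Fin k → ℂ := fun n l =>
    ((lam:ℂ) ^ (n+1))⁻¹ * d l ^ (n+1) - ((lam:ℂ) ^ n)⁻¹ * d l ^ n with he
  -- bound on e
  have habs_e : ∀ (n : ℕ) (l : Fin k), ‖e n l‖ ≤ 2 / lam ^ n := by
    intro n l
    have hpn : (0:ℝ) < lam ^ n := pow_pos hlam0 n
    have hnormlam : ∀ m : ℕ, ‖((lam:ℂ) ^ m)⁻¹‖ = (lam ^ m)⁻¹ := by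
      intro m
      rw [norm_inv, norm_pow, Complex.norm_real, Real.norm_eq_abs, abs_of_pos hlam0]
    rcases Nat.eq_zero_or_pos l.1 with h0 | hpos
    · -- l = 0 : the two terms cancel
      have hl : l = ⟨0, by omega⟩ := Fin.ext h0
      have : e n l = 0 := by
        rw [he]
        simp only [hl, hd0]
        rw [inv_mul_cancel₀ (pow_ne_zero _ hlamne), inv_mul_cancel₀ (pow_ne_zero _ hlamne)]
        ring
      rw [this, norm_zero]
      positivity
    · -- ‖d l‖ ≤ 1
      have hdl : ‖d l‖ ≤ 1 := by
        rcases Nat.lt_or_ge l.1 2 with h2 | h2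
        · have hl : l = ⟨1, by omega⟩ := Fin.ext (show l.1 = 1 by omega)
          rw [hl, hd1, norm_inv, Complex.norm_real, Real.norm_eq_abs, abs_of_pos hlam0]
          rw [inv_le_one_iff₀]
          right; exact le_of_lt hlam
        · exact le_of_eq (hd2 l h2)
      have h1 : ‖e n l‖ ≤ ‖((lam:ℂ) ^ (n+1))⁻¹ * d l ^ (n+1)‖ + ‖((lam:ℂ) ^ n)⁻¹ * d l ^ n‖ :=
        norm_sub_le _ _
      have h2 : ∀ m : ℕ, ‖((lam:ℂ) ^ m)⁻¹ * d l ^ m‖ ≤ (lam ^ m)⁻¹ := by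
        intro m
        rw [norm_mul, hnormlam, norm_pow]
        calc (lam ^ m)⁻¹ * ‖d l‖ ^ m ≤ (lam ^ m)⁻¹ * 1 ^ m := by
              apply mul_le_mul_of_nonneg_left (pow_le_pow_left₀ (norm_nonneg _) hdl m)
              positivity
          _ = (lam ^ m)⁻¹ := by simp
      have h3 : (lam ^ (n+1))⁻¹ ≤ (lam ^ n)⁻¹ := by
        apply inv_anti₀ hpn
        calc lam ^ n = lam ^ n * 1 := by ring
          _ ≤ lam ^ n * lam := by nlinarith
          _ = lam ^ (n+1) := by ring
      calc ‖e n l‖ ≤ (lam ^ (n+1))⁻¹ + (lam ^ n)⁻¹ := le_trans h1 (add_le_add (h2 _) (h2 _))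
        _ ≤ (lam ^ n)⁻¹ + (lam ^ n)⁻¹ := by linarith
        _ = 2 / lam ^ n := by ring
  -- entries of conjugated diagonal matrices
  have entry : ∀ (v : Fin k → ℂ) (i j : Fin k),
      (U⁻¹ * Matrix.diagonal v * U) i j = ∑ l, U⁻¹ i l * v l * U l j := by
    intro v i j
    rw [Matrix.mul_apply]
    exact Finset.sum_congr rfl fun l _ => by rw [Matrix.mul_diagonal]
  -- the matrix identity
  have hmat : ∀ (n : ℕ) (i j : Fin k),
      ((lam:ℂ) ^ (n+1))⁻¹ * (Ac ^ (n+1)) i j - ((lam:ℂ) ^ n)⁻¹ * (Ac ^ n) i j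
        = (U⁻¹ * Matrix.diagonal (e n) * U) i j := by
    intro n i j
    rw [hpow, hpow, entry, entry, entry, Finset.mul_sum, Finset.mul_sum,
      ← Finset.sum_sub_distrib]
    refine Finset.sum_congr rfl fun l _ => ?_
    rw [he]
    ring
  -- entrywise formula for the difference vector
  have key : ∀ (n : ℕ) (i : Fin k),
      ((((lam ^ (n+1))⁻¹ • (A ^ (n+1)).mulVec u - (lam ^ n)⁻¹ • (A ^ n).mulVec u) i : ℝ) : ℂ)
        = ∑ j, (U⁻¹ * Matrix.diagonal (e n) * U) i j * (u j : ℂ) := by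
    intro n i
    have hc : ∀ m : ℕ, ((A ^ m) : Matrix (Fin k) (Fin k) ℝ).mulVec u i
        = ∑ j, (A ^ m) i j * u j := fun m => rfl
    simp only [Pi.sub_apply, Pi.smul_apply, smul_eq_mul, hc]
    push_cast
    have hco : ∀ (m : ℕ) (j : Fin k), (((A ^ m) i j : ℝ) : ℂ) = (Ac ^ m) i j := by
      intro m j
      rw [hmap m, Matrix.map_apply]
    simp only [hco]
    rw [Finset.mul_sum, Finset.mul_sum, ← Finset.sum_sub_distrib]
    refine Finset.sum_congr rfl fun j _ => ?_
    rw [← hmat n i j]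
    ring
  -- the constant B
  set B : ℝ := ∑ i : Fin k, ∑ j : Fin k, ∑ l : Fin k, ‖U⁻¹ i l‖ * ‖U l j‖ * |u j| with hB
  have hB0 : 0 ≤ B := by
    apply Finset.sum_nonneg; intro i _
    apply Finset.sum_nonneg; intro j _
    apply Finset.sum_nonneg; intro l _
    positivity
  -- entrywise bound
  have hentry_bound : ∀ (n : ℕ) (i : Fin k),
      |(((lam ^ (n+1))⁻¹ • (A ^ (n+1)).mulVec u - (lam ^ n)⁻¹ • (A ^ n).mulVec u) i)|
        ≤ 2 / lam ^ n * (B + 1) := by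
    intro n i
    have hpn : (0:ℝ) < lam ^ n := pow_pos hlam0 n
    have h1 : |(((lam ^ (n+1))⁻¹ • (A ^ (n+1)).mulVec u - (lam ^ n)⁻¹ • (A ^ n).mulVec u) i)|
        = ‖(∑ j, (U⁻¹ * Matrix.diagonal (e n) * U) i j * (u j : ℂ))‖ := by
      rw [← key n i, Complex.norm_real, Real.norm_eq_abs]
    rw [h1]
    have h2 : ‖(∑ j, (U⁻¹ * Matrix.diagonal (e n) * U) i j * (u j : ℂ))‖
        ≤ ∑ j, ‖(U⁻¹ * Matrix.diagonal (e n) * U) i j‖ * |u j| := by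
      refine le_trans (norm_sum_le _ _) (Finset.sum_le_sum fun j _ => ?_)
      rw [norm_mul, Complex.norm_real, Real.norm_eq_abs]
    have h3 : ∀ j, ‖(U⁻¹ * Matrix.diagonal (e n) * U) i j‖
        ≤ ∑ l, ‖U⁻¹ i l‖ * (2 / lam ^ n) * ‖U l j‖ := by
      intro j
      rw [entry]
      refine le_trans (norm_sum_le _ _) (Finset.sum_le_sum fun l _ => ?_)
      rw [norm_mul, norm_mul]
      have := habs_e n l
      have h4 : ‖U⁻¹ i l‖ * ‖e n l‖ * ‖U l j‖ ≤ ‖U⁻¹ i l‖ * (2 / lam ^ n) * ‖U l j‖ := by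
        apply mul_le_mul_of_nonneg_right _ (norm_nonneg _)
        exact mul_le_mul_of_nonneg_left this (norm_nonneg _)
      exact h4
    have h5 : (∑ j, ‖(U⁻¹ * Matrix.diagonal (e n) * U) i j‖ * |u j|)
        ≤ ∑ j, (∑ l, ‖U⁻¹ i l‖ * (2 / lam ^ n) * ‖U l j‖) * |u j| := by
      refine Finset.sum_le_sum fun j _ => ?_
      exact mul_le_mul_of_nonneg_right (h3 j) (abs_nonneg _)
    have h6 : (∑ j, (∑ l, ‖U⁻¹ i l‖ * (2 / lam ^ n) * ‖U l j‖) * |u j|)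
        = 2 / lam ^ n * ∑ j, ∑ l, ‖U⁻¹ i l‖ * ‖U l j‖ * |u j| := by
      rw [Finset.mul_sum]
      refine Finset.sum_congr rfl fun j _ => ?_
      rw [Finset.sum_mul, Finset.mul_sum]
      refine Finset.sum_congr rfl fun l _ => ?_
      ring
    have h7 : (∑ j, ∑ l, ‖U⁻¹ i l‖ * ‖U l j‖ * |u j|) ≤ B := by
      rw [hB]
      apply Finset.single_le_sum (f := fun i => ∑ j : Fin k, ∑ l : Fin k,
        ‖U⁻¹ i l‖ * ‖U l j‖ * |u j|) _ (Finset.mem_univ i)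
      intro i' _
      apply Finset.sum_nonneg; intro j _
      apply Finset.sum_nonneg; intro l _
      positivity
    calc ‖(∑ j, (U⁻¹ * Matrix.diagonal (e n) * U) i j * (u j : ℂ))‖
        ≤ 2 / lam ^ n * ∑ j, ∑ l, ‖U⁻¹ i l‖ * ‖U l j‖ * |u j| := by
          rw [← h6]; exact le_trans h2 h5
      _ ≤ 2 / lam ^ n * B := by
          apply mul_le_mul_of_nonneg_left h7; positivity
      _ ≤ 2 / lam ^ n * (B + 1) := by
          apply mul_le_mul_of_nonneg_left _ (by positivity)
          linarith
  -- conclusion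
  refine ⟨lam, hlam, Real.sqrt k * (2 * (B + 1)), ?_, ?_⟩
  · have hkpos : (0:ℝ) < (k:ℝ) := by
      have : 0 < k := by omega
      exact_mod_cast this
    have hk0 : (0:ℝ) < Real.sqrt k := Real.sqrt_pos.mpr hkpos
    have h2B : (0:ℝ) < 2 * (B + 1) := by linarith
    exact mul_pos hk0 h2B
  · intro n _
    have hpn : (0:ℝ) < lam ^ n := pow_pos hlam0 n
    set w : Fin k → ℝ :=
      (lam ^ (n+1))⁻¹ • (A ^ (n+1)).mulVec u - (lam ^ n)⁻¹ • (A ^ n).mulVec u with hw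
    have hnorm : ‖(EuclideanSpace.equiv (Fin k) ℝ).symm w‖
        = Real.sqrt (∑ i, ‖w i‖ ^ 2) := by
      rw [EuclideanSpace.norm_eq]
      rfl
    rw [hnorm]
    have hbound : ∀ i : Fin k, ‖w i‖ ^ 2 ≤ (2 / lam ^ n * (B + 1)) ^ 2 := by
      intro i
      have h := hentry_bound n i
      have h0 : ‖w i‖ = |w i| := Real.norm_eq_abs _
      rw [h0]
      apply sq_le_sq' _ h
      · have : 0 ≤ |w i| := abs_nonneg _
        linarith [h, this]
    have hsum : (∑ i : Fin k, ‖w i‖ ^ 2) ≤ (k : ℝ) * (2 / lam ^ n * (B + 1)) ^ 2 := by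
      calc (∑ i : Fin k, ‖w i‖ ^ 2) ≤ ∑ _i : Fin k, (2 / lam ^ n * (B + 1)) ^ 2 :=
            Finset.sum_le_sum fun i _ => hbound i
        _ = (k : ℝ) * (2 / lam ^ n * (B + 1)) ^ 2 := by
            rw [Finset.sum_const, Finset.card_univ, Fintype.card_fin, nsmul_eq_mul]
    have hfin : Real.sqrt (∑ i, ‖w i‖ ^ 2)
        ≤ Real.sqrt k * (2 / lam ^ n * (B + 1)) := by
      have h1 : Real.sqrt (∑ i, ‖w i‖ ^ 2)
          ≤ Real.sqrt ((k : ℝ) * (2 / lam ^ n * (B + 1)) ^ 2) := Real.sqrt_le_sqrt hsum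
      have h2 : Real.sqrt ((k : ℝ) * (2 / lam ^ n * (B + 1)) ^ 2)
          = Real.sqrt k * (2 / lam ^ n * (B + 1)) := by
        have hx : (0:ℝ) ≤ 2 / lam ^ n * (B + 1) := by
          have h2n : (0:ℝ) ≤ 2 / lam ^ n := by positivity
          nlinarith
        rw [Real.sqrt_mul (by positivity : (0:ℝ) ≤ (k:ℝ)), Real.sqrt_sq hx]
      rw [h2] at h1
      exact h1
    calc Real.sqrt (∑ i, ‖w i‖ ^ 2) ≤ Real.sqrt k * (2 / lam ^ n * (B + 1)) := hfin
      _ = Real.sqrt k * (2 * (B + 1)) / lam ^ n := by ring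
end

section
/- Let V be a real vector space of finite dimension r ≥ 2, and let B be a symmetric bilinear form on V of signature (1, r−1), i.e. V admits a basis e₁, …, e_r with B(eᵢ, eⱼ) = 0 for i ≠ j, B(e₁, e₁) = 1, and B(eᵢ, eᵢ) = −1 for i ≥ 2. Let g : V → V be a linear isomorphism satisfying B(g x, g y) = B(x, y) for all x, y ∈ V. Suppose a real number λ > 1 is an eigenvalue of g. Then: (i) λ is a simple root of the characteristic polynomial of g, so its eigenspace is one-dimensional; (ii) λ⁻¹ is an eigenvalue of g, and it is also a simple root of the characteristic polynomial; (iii) every complex root μ of the characteristic polynomial of g with μ ∉ {λ, λ⁻¹} satisfies |μ| = 1. -/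
set_option autoImplicit false
set_option maxHeartbeats 1000000
open Polynomial Matrix


lemma aux_charpoly_sub_smul_one {n : Type*} [DecidableEq n] [Fintype n] {R : Type*} [CommRing R]
    (M : Matrix n n R) (c : R) :
    (M - c • 1).charpoly = M.charpoly.comp (X + C c) := by
  rw [Matrix.charpoly, Matrix.charpoly, comp_eq_aeval, ← AlgHom.coe_toRingHom, RingHom.map_det]
  congr 1
  ext i j
  by_cases h : i = j
  · subst h
    simp only [charmatrix_apply_eq, RingHom.mapMatrix_apply, Matrix.map_apply, AlgHom.coe_toRingHom,
      map_sub, aeval_X, aeval_C, Polynomial.algebraMap_eq, Matrix.sub_apply, Matrix.smul_apply,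
      Matrix.one_apply_eq, smul_eq_mul, mul_one, map_sub]
    ring
  · simp only [charmatrix_apply_ne _ _ _ h, RingHom.mapMatrix_apply, Matrix.map_apply,
      AlgHom.coe_toRingHom, map_neg, aeval_C, Polynomial.algebraMap_eq, Matrix.sub_apply,
      Matrix.smul_apply, Matrix.one_apply_ne h, smul_eq_mul, mul_zero, sub_zero]

lemma aux_eval_charpoly {n : Type*} [DecidableEq n] [Fintype n] {R : Type*} [CommRing R]
    (M : Matrix n n R) (t : R) :
    M.charpoly.eval t = (t • (1 : Matrix n n R) - M).det := by
  rw [Matrix.charpoly, ← Polynomial.coe_evalRingHom, RingHom.map_det]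
  congr 1
  ext i j
  by_cases h : i = j
  · subst h
    simp [charmatrix_apply_eq]
  · simp [charmatrix_apply_ne _ _ _ h, Matrix.one_apply_ne h]

lemma aux_dot_diag {n : Type*} [Fintype n] [DecidableEq n] {R : Type*} [CommRing R]
    (d : n → R) (f h : n → R) :
    f ⬝ᵥ ((Matrix.diagonal d) *ᵥ h) = ∑ i, d i * (f i * h i) := by
  simp only [dotProduct, Matrix.mulVec_diagonal]
  exact Finset.sum_congr rfl fun i _ => by ring

lemma aux_dot_conj {n : Type*} [Fintype n] [DecidableEq n] {R : Type*} [CommRing R]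
    (M J : Matrix n n R) (f h : n → R) :
    (M *ᵥ f) ⬝ᵥ (J *ᵥ (M *ᵥ h)) = f ⬝ᵥ ((Mᵀ * J * M) *ᵥ h) := by
  rw [mulVec_mulVec, dotProduct_mulVec, ← transpose_transpose M, mulVec_transpose, vecMul_vecMul,
    ← dotProduct_mulVec]
  simp [Matrix.mul_assoc]

lemma aux_single_dot {n : Type*} [Fintype n] [DecidableEq n] {R : Type*} [CommRing R]
    (A : Matrix n n R) (i j : n) :
    (Pi.single i (1:R)) ⬝ᵥ (A *ᵥ Pi.single j 1) = A i j := by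
  rw [mulVec_single]
  simp [single_dotProduct]

lemma aux_phi_dep {r : ℕ} (i0 : Fin r) (ε : Fin r → ℝ)
    (hε : ∀ i, ε i = if i = i0 then 1 else -1)
    (f h : Fin r → ℝ)
    (hf : ∑ i, ε i * (f i * f i) = 0) (hh : ∑ i, ε i * (h i * h i) = 0)
    (hfh : ∑ i, ε i * (f i * h i) = 0) :
    h = 0 ∨ ∃ c : ℝ, f = c • h := by
  classical
  set S : Finset (Fin r) := Finset.univ.erase i0 with hS
  have expand : ∀ p q : Fin r → ℝ,
      ∑ i, ε i * (p i * q i) = p i0 * q i0 - ∑ i ∈ S, p i * q i := by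
    intro p q
    rw [← Finset.add_sum_erase _ _ (Finset.mem_univ i0), hε i0, if_pos rfl, one_mul, ← hS]
    congr 1
    rw [← Finset.sum_neg_distrib]
    refine Finset.sum_congr rfl fun i hi => ?_
    rw [hε i, if_neg (Finset.ne_of_mem_erase hi), neg_one_mul]
  rw [expand] at hf hh hfh
  set a := f i0
  set b := h i0
  have hf' : ∑ i ∈ S, f i * f i = a * a := by linarith
  have hh' : ∑ i ∈ S, h i * h i = b * b := by linarith
  have hfh' : ∑ i ∈ S, f i * h i = a * b := by linarith
  by_cases hb : b = 0
  · left
    have hzero : ∑ i ∈ S, h i * h i = 0 := by rw [hh', hb, mul_zero]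
    have hall := (Finset.sum_eq_zero_iff_of_nonneg (fun i _ => mul_self_nonneg (h i))).mp hzero
    funext i
    by_cases hi : i = i0
    · rw [hi]; exact hb
    · have := hall i (Finset.mem_erase.mpr ⟨hi, Finset.mem_univ i⟩)
      simpa [mul_self_eq_zero] using this
  · right
    refine ⟨a / b, ?_⟩
    have hkey : ∑ i ∈ S, (b * f i - a * h i) ^ 2 = 0 := by
      have e1 : ∑ i ∈ S, (b * f i - a * h i) ^ 2 =
          b ^ 2 * (∑ i ∈ S, f i * f i) - 2 * a * b * (∑ i ∈ S, f i * h i)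
            + a ^ 2 * (∑ i ∈ S, h i * h i) := by
        rw [Finset.mul_sum, Finset.mul_sum, Finset.mul_sum, ← Finset.sum_sub_distrib,
          ← Finset.sum_add_distrib]
        exact Finset.sum_congr rfl fun i _ => by ring
      rw [e1, hf', hh', hfh']
      ring
    have hall := (Finset.sum_eq_zero_iff_of_nonneg (fun i _ => sq_nonneg _)).mp hkey
    funext i
    by_cases hi : i = i0
    · rw [hi]
      show f i0 = a / b * h i0
      field_simp [mul_comm]
      rfl
    · have := hall i (Finset.mem_erase.mpr ⟨hi, Finset.mem_univ i⟩)
      have h2 : b * f i - a * h i = 0 := by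
        have := sq_eq_zero_iff.mp this
        linarith [this]
      show f i = a / b * h i
      field_simp
      linarith

/-- **Spectral description of a hyperbolic isometry of a lattice of signature `(1, r−1)`.**
If `g` preserves a symmetric bilinear form of signature `(1, r−1)` on a real vector space of
dimension `r ≥ 2` and has a real eigenvalue `λ > 1`, then `λ` is a simple root of the
characteristic polynomial with one-dimensional eigenspace, `λ⁻¹` is an eigenvalue and a
simple root, and every other complex root has absolute value `1`. -/
theorem stmt7 (V : Type*) [AddCommGroup V] [Module ℝ V] [FiniteDimensional ℝ V]
    (r : ℕ) (hr : 2 ≤ r) (hrank : Module.finrank ℝ V = r)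
    (B : V →ₗ[ℝ] V →ₗ[ℝ] ℝ) (hsymm : ∀ x y, B x y = B y x)
    (e : Module.Basis (Fin r) ℝ V)
    (horth : ∀ i j : Fin r, i ≠ j → B (e i) (e j) = 0)
    (hpos : B (e ⟨0, by omega⟩) (e ⟨0, by omega⟩) = 1)
    (hneg : ∀ i : Fin r, i ≠ ⟨0, by omega⟩ → B (e i) (e i) = -1)
    (g : V →ₗ[ℝ] V) (hg : Function.Bijective g)
    (hisom : ∀ x y, B (g x) (g y) = B x y)
    (lam : ℝ) (hlam : 1 < lam) (heig : Module.End.HasEigenvalue g lam) :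
    (g.charpoly.rootMultiplicity lam = 1 ∧
      Module.finrank ℝ (Module.End.eigenspace g lam) = 1) ∧
    (Module.End.HasEigenvalue g lam⁻¹ ∧ g.charpoly.rootMultiplicity lam⁻¹ = 1) ∧
    (∀ μ : ℂ, (g.charpoly.map (algebraMap ℝ ℂ)).IsRoot μ →
      μ ≠ (lam : ℂ) → μ ≠ ((lam : ℂ))⁻¹ → ‖μ‖ = 1) := by
  classical
  set i0 : Fin r := ⟨0, by omega⟩ with hi0
  set ε : Fin r → ℝ := fun i => if i = i0 then 1 else -1 with hε
  have hεval : ∀ i, ε i = if i = i0 then 1 else -1 := fun i => rfl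
  have hεsq : ∀ i, ε i * ε i = 1 := by
    intro i; rw [hεval]; by_cases h : i = i0 <;> simp [h]
  have hBe : ∀ i j, B (e i) (e j) = if i = j then ε i else 0 := by
    intro i j
    by_cases h : i = j
    · subst h
      by_cases h0 : i = i0
      · subst h0; rw [if_pos rfl, hεval, if_pos rfl]; exact hpos
      · rw [if_pos rfl, hεval, if_neg h0]; exact hneg i h0
    · rw [if_neg h]; exact horth i j h
  -- B in coordinates
  have hB : ∀ x y : V, B x y = ∑ i, ε i * (e.equivFun x i * e.equivFun y i) := by
    intro x y
    conv_lhs => rw [← Module.Basis.sum_equivFun e x, ← Module.Basis.sum_equivFun e y]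
    simp only [map_sum, _root_.map_smul, LinearMap.sum_apply, LinearMap.smul_apply,
      smul_eq_mul, hBe, mul_ite, mul_zero, ite_mul, zero_mul, Finset.sum_ite_eq,
      Finset.sum_ite_eq', Finset.mem_univ, if_true]
    exact Finset.sum_congr rfl fun i _ => by ring
  have hEFinj : Function.Injective (e.equivFun : V → (Fin r → ℝ)) := e.equivFun.injective
  have hEF0 : ∀ x : V, e.equivFun x = 0 → x = 0 := by
    intro x hx
    apply hEFinj
    rw [hx, map_zero]
  -- dependence lemma in V
  have L1' : ∀ x y : V, B x x = 0 → B y y = 0 → B x y = 0 → y = 0 ∨ ∃ c : ℝ, x = c • y := by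
    intro x y hx hy hxy
    rw [hB] at hx hy hxy
    rcases aux_phi_dep i0 ε hεval (e.equivFun x) (e.equivFun y) hx hy hxy with h | ⟨c, hc⟩
    · exact Or.inl (hEF0 y h)
    · refine Or.inr ⟨c, hEFinj ?_⟩
      rw [hc]
      exact (e.equivFun.map_smul c y).symm
  -- isometry consequences
  have horthE : ∀ (s t : ℝ) (x y : V), g x = s • x → g y = t • y → s * t ≠ 1 → B x y = 0 := by
    intro s t x y hx hy hst
    have h := hisom x y
    rw [hx, hy] at h
    simp only [LinearMap.map_smul, LinearMap.smul_apply, smul_eq_mul] at h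
    have : (s * t - 1) * B x y = 0 := by linarith [h]
    rcases mul_eq_zero.mp this with h' | h'
    · exact absurd (by linarith : s * t = 1) hst
    · exact h'
  have hlam0 : lam ≠ 0 := by positivity
  have hlamsq : lam * lam ≠ 1 := by nlinarith
  -- general key lemma for real eigenvalues t with t*t ≠ 1
  have keyEig : ∀ t : ℝ, t * t ≠ 1 → Module.End.HasEigenvalue g t →
      Module.finrank ℝ (Module.End.eigenspace g t) = 1 ∧
        g.charpoly.rootMultiplicity t = 1 := by
    intro t ht hteig
    obtain ⟨v, hv⟩ := hteig.exists_hasEigenvector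
    have hgv : g v = t • v := hv.apply_eq_smul
    have hv0 : v ≠ 0 := hv.right
    have hspan : Module.End.eigenspace g t = Submodule.span ℝ {v} := by
      apply le_antisymm
      · intro w hw
        rw [Module.End.mem_eigenspace_iff] at hw
        have h1 : B w w = 0 := horthE t t w w hw hw ht
        have h2 : B v v = 0 := horthE t t v v hgv hgv ht
        have h3 : B w v = 0 := horthE t t w v hw hgv ht
        rcases L1' w v h1 h2 h3 with h | ⟨c, hc⟩
        · exact absurd h hv0
        · exact Submodule.mem_span_singleton.mpr ⟨c, hc.symm⟩
      · rw [Submodule.span_le, Set.singleton_subset_iff]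
        exact Module.End.mem_eigenspace_iff.mpr hgv
    have hdim : Module.finrank ℝ (Module.End.eigenspace g t) = 1 := by
      rw [hspan]; exact finrank_span_singleton hv0
    -- generalized eigenspace = eigenspace
    set N : Module.End ℝ V := g - t • 1 with hN
    have hNspec : ∀ z : V, N z = g z - t • z := by
      intro z
      rw [hN]
      simp [LinearMap.sub_apply, LinearMap.smul_apply]
    have hker2 : ∀ y : V, N (N y) = 0 → N y = 0 := by
      intro y hy
      by_cases hx0' : N y = 0
      · exact hx0'
      exfalso
      have hNNy : g (N y) - t • (N y) = 0 := by rw [← hNspec (N y)]; exact hy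
      have hgx : g (N y) = t • (N y) := by rw [← sub_eq_zero]; exact hNNy
      have hgy : g y = t • y + N y := by
        have h5 : g y - t • y = N y := (hNspec y).symm
        rw [← h5]; abel
      have hxx : B (N y) (N y) = 0 := horthE t t (N y) (N y) hgx hgx ht
      have hxy : B (N y) y = 0 := by
        have h := hisom (N y) y
        rw [hgx, hgy] at h
        simp only [LinearMap.map_smul, map_add, LinearMap.smul_apply, LinearMap.add_apply,
          smul_eq_mul] at h
        rw [hxx] at h
        have : (t * t - 1) * B (N y) y = 0 := by linarith
        rcases mul_eq_zero.mp this with h' | h'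
        · exact absurd (by linarith : t * t = 1) ht
        · exact h'
      have hyy : B y y = 0 := by
        have h := hisom y y
        rw [hgy] at h
        simp only [LinearMap.map_smul, map_add, LinearMap.smul_apply, LinearMap.add_apply,
          smul_eq_mul] at h
        rw [hxx] at h
        have hyx : B y (N y) = 0 := by rw [hsymm]; exact hxy
        rw [hxy, hyx] at h
        have : (t * t - 1) * B y y = 0 := by linarith
        rcases mul_eq_zero.mp this with h' | h'
        · exact absurd (by linarith : t * t = 1) ht
        · exact h'
      have hyx : B y (N y) = 0 := by rw [hsymm]; exact hxy
      rcases L1' y (N y) hyy hxx hyx with h | ⟨c, hc⟩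
      · exact hx0' h
      · apply hx0'
        have hNx : N (N y) = 0 := hy
        calc N y = N (c • N y) := by rw [← hc]
          _ = c • N (N y) := by rw [_root_.map_smul]
          _ = 0 := by rw [hNx, smul_zero]
    have hkerpow : ∀ k : ℕ, ∀ y : V, (N ^ k) y = 0 → N y = 0 := by
      intro k
      induction k with
      | zero => intro y hy; simp only [pow_zero, Module.End.one_apply] at hy; rw [hy, map_zero]
      | succ n ih =>
        intro y hy
        rw [pow_succ, Module.End.mul_apply] at hy
        exact hker2 y (ih (N y) hy)
    have hmax : Module.End.maxGenEigenspace g t = Module.End.eigenspace g t := by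
      apply le_antisymm
      · intro m hm
        rw [Module.End.mem_maxGenEigenspace] at hm
        obtain ⟨k, hk⟩ := hm
        rw [Module.End.mem_eigenspace_iff]
        have := hkerpow k m hk
        rw [hNspec m] at this
        linear_combination (norm := module) this
      · intro m hm
        rw [Module.End.mem_maxGenEigenspace]
        refine ⟨1, ?_⟩
        rw [pow_one]
        rw [Module.End.mem_eigenspace_iff] at hm
        show N m = 0
        rw [hNspec m, hm, sub_self]
    have hrm : g.charpoly.rootMultiplicity t = 1 := by
      rw [Polynomial.rootMultiplicity_eq_natTrailingDegree]
      have hcp : g.charpoly.comp (X + C t) = (N : V →ₗ[ℝ] V).charpoly := by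
        rw [← LinearMap.charpoly_toMatrix g e, ← LinearMap.charpoly_toMatrix (N : V →ₗ[ℝ] V) e]
        have hmat : LinearMap.toMatrix e e (N : V →ₗ[ℝ] V)
            = LinearMap.toMatrix e e g - t • 1 := by
          rw [hN, map_sub, _root_.map_smul]
          congr 1
          congr 1
          exact LinearMap.toMatrix_id e
        rw [hmat, aux_charpoly_sub_smul_one]
      rw [hcp, ← LinearMap.finrank_maxGenEigenspace_zero_eq]
      have hsame : Module.End.maxGenEigenspace (N : Module.End ℝ V) 0
          = Module.End.maxGenEigenspace g t := by
        ext m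
        rw [Module.End.mem_maxGenEigenspace, Module.End.mem_maxGenEigenspace]
        simp only [zero_smul, sub_zero]
        rfl
      rw [hsame, hmax, hdim]
    exact ⟨hdim, hrm⟩
  -- matrix setup
  set M : Matrix (Fin r) (Fin r) ℝ := LinearMap.toMatrix e e g with hM
  have hMv : ∀ x : V, M *ᵥ (e.equivFun x) = e.equivFun (g x) := by
    intro x
    rw [Module.Basis.equivFun_apply, Module.Basis.equivFun_apply, hM]
    exact LinearMap.toMatrix_mulVec_repr e e g x
  set J : Matrix (Fin r) (Fin r) ℝ := Matrix.diagonal ε with hJ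
  have hΦM : ∀ f h : Fin r → ℝ,
      (M *ᵥ f) ⬝ᵥ (J *ᵥ (M *ᵥ h)) = f ⬝ᵥ (J *ᵥ h) := by
    intro f h
    have hx := hMv (e.equivFun.symm f)
    have hy := hMv (e.equivFun.symm h)
    rw [LinearEquiv.apply_symm_apply] at hx hy
    calc (M *ᵥ f) ⬝ᵥ (J *ᵥ (M *ᵥ h))
        = B (g (e.equivFun.symm f)) (g (e.equivFun.symm h)) := by
          rw [hx, hy, hJ, aux_dot_diag, hB]
      _ = B (e.equivFun.symm f) (e.equivFun.symm h) := hisom _ _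
      _ = f ⬝ᵥ (J *ᵥ h) := by
          rw [hB, LinearEquiv.apply_symm_apply, LinearEquiv.apply_symm_apply, hJ, aux_dot_diag]
  have hMJM : Mᵀ * J * M = J := by
    ext i j
    have h := hΦM (Pi.single i 1) (Pi.single j 1)
    rw [aux_dot_conj, aux_single_dot, aux_single_dot] at h
    exact h
  have hJJ : J * J = 1 := by
    rw [hJ, Matrix.diagonal_mul_diagonal]
    have h1 : (fun i => ε i * ε i) = (fun _ : Fin r => (1:ℝ)) := funext hεsq
    rw [h1, Matrix.diagonal_one]
  have hMJMT : M * J * Mᵀ = J := by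
    have h1 : (J * Mᵀ * J) * M = 1 := by
      calc (J * Mᵀ * J) * M = J * (Mᵀ * J * M) := by
            rw [Matrix.mul_assoc, Matrix.mul_assoc, Matrix.mul_assoc]
        _ = J * J := by rw [hMJM]
        _ = 1 := hJJ
    have h2 : M * (J * Mᵀ * J) = 1 := mul_eq_one_comm.mp h1
    have h3 := congrArg (· * J) h2
    simp only [Matrix.one_mul] at h3
    calc M * J * Mᵀ = M * J * Mᵀ * (J * J) := by rw [hJJ, Matrix.mul_one]
      _ = M * (J * Mᵀ * J) * J := by
          simp only [Matrix.mul_assoc]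
      _ = 1 * J := by rw [h2]
      _ = J := Matrix.one_mul J
  -- coordinates of the lam-eigenvector
  obtain ⟨v₁, hv₁⟩ := heig.exists_hasEigenvector
  set x : Fin r → ℝ := e.equivFun v₁ with hxdef
  have hx0 : x ≠ 0 := fun h => hv₁.right (hEF0 v₁ h)
  have hMx : M *ᵥ x = lam • x := by
    rw [hxdef, hMv, hv₁.apply_eq_smul, _root_.map_smul]
  -- existence of lam⁻¹ eigenvector
  have hdet1 : (M - lam • 1).det = 0 := by
    rw [← Matrix.exists_mulVec_eq_zero_iff]
    refine ⟨x, hx0, ?_⟩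
    rw [Matrix.sub_mulVec, Matrix.smul_mulVec, Matrix.one_mulVec, hMx, sub_self]
  have hdet2 : (Mᵀ - lam • 1).det = 0 := by
    have : (M - lam • 1)ᵀ = Mᵀ - lam • 1 := by
      rw [Matrix.transpose_sub, Matrix.transpose_smul, Matrix.transpose_one]
    rw [← this, Matrix.det_transpose]
    exact hdet1
  obtain ⟨y, hy0, hyeq⟩ := Matrix.exists_mulVec_eq_zero_iff.mpr hdet2
  have hMTy : Mᵀ *ᵥ y = lam • y := by
    rw [Matrix.sub_mulVec, Matrix.smul_mulVec, Matrix.one_mulVec, sub_eq_zero] at hyeq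
    exact hyeq
  have hz : M *ᵥ (J *ᵥ y) = lam⁻¹ • (J *ᵥ y) := by
    have h1 : (M * J * Mᵀ) *ᵥ y = J *ᵥ y := by rw [hMJMT]
    rw [← Matrix.mulVec_mulVec, ← Matrix.mulVec_mulVec, hMTy, Matrix.mulVec_smul,
      Matrix.mulVec_smul] at h1
    have h2 := congrArg (fun w => lam⁻¹ • w) h1
    simp only [smul_smul, inv_mul_cancel₀ hlam0, one_smul] at h2
    exact h2
  have hz0 : J *ᵥ y ≠ 0 := by
    intro h
    apply hy0
    have : J *ᵥ (J *ᵥ y) = y := by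
      rw [Matrix.mulVec_mulVec, hJJ, Matrix.one_mulVec]
    rw [h, Matrix.mulVec_zero] at this
    exact this.symm
  have heig2 : Module.End.HasEigenvalue g lam⁻¹ := by
    set w : V := e.equivFun.symm (J *ᵥ y) with hw
    have hgw : g w = lam⁻¹ • w := by
      apply hEFinj
      rw [← hMv, hw, LinearEquiv.apply_symm_apply, _root_.map_smul, LinearEquiv.apply_symm_apply, hz]
    have hw0 : w ≠ 0 := by
      intro h
      apply hz0
      rw [hw] at h
      have := congrArg e.equivFun h
      rw [LinearEquiv.apply_symm_apply, map_zero] at this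
      exact this
    exact Module.End.hasEigenvalue_of_hasEigenvector
      ⟨Module.End.mem_eigenspace_iff.mpr hgw, hw0⟩
  have hlaminv0 : lam⁻¹ ≠ 0 := by positivity
  have hlaminvsq : lam⁻¹ * lam⁻¹ ≠ 1 := by
    have h1 : lam⁻¹ < 1 := by
      rw [inv_lt_one_iff₀]; right; exact hlam
    have h2 : 0 < lam⁻¹ := by positivity
    nlinarith
  obtain ⟨hdimlam, hrmlam⟩ := keyEig lam hlamsq heig
  obtain ⟨hdiminv, hrminv⟩ := keyEig lam⁻¹ hlaminvsq heig2
  refine ⟨⟨hrmlam, hdimlam⟩, ⟨heig2, hrminv⟩, ?_⟩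
  -- part (iii)
  intro μ hroot hμ1 hμ2
  by_contra habs
  set Mc : Matrix (Fin r) (Fin r) ℂ := M.map (algebraMap ℝ ℂ) with hMc
  have hroot' : Mc.charpoly.IsRoot μ := by
    rw [hMc, Matrix.charpoly_map]
    rwa [← LinearMap.charpoly_toMatrix g e, ← hM] at hroot
  have hdet0 : (μ • (1 : Matrix (Fin r) (Fin r) ℂ) - Mc).det = 0 := by
    rw [← aux_eval_charpoly]
    exact hroot'
  obtain ⟨w, hw0, hweq⟩ := Matrix.exists_mulVec_eq_zero_iff.mpr hdet0
  have hMcw : Mc *ᵥ w = μ • w := by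
    rw [Matrix.sub_mulVec, Matrix.smul_mulVec, Matrix.one_mulVec, sub_eq_zero] at hweq
    exact hweq.symm
  set εc : Fin r → ℂ := fun i => ((ε i : ℝ) : ℂ) with hεc
  set Jc : Matrix (Fin r) (Fin r) ℂ := Matrix.diagonal εc with hJc
  have hJcmap : J.map (algebraMap ℝ ℂ) = Jc := by
    rw [hJ, hJc]
    rw [Matrix.diagonal_map (map_zero _)]
    rfl
  have hJcMc : Mcᵀ * Jc * Mc = Jc := by
    have := congrArg (fun A => A.map (algebraMap ℝ ℂ)) hMJM
    simp only [Matrix.map_mul] at this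
    rw [Matrix.transpose_map, hJcmap, ← hMc] at this
    exact this
  have hBcM : ∀ f h : Fin r → ℂ,
      (Mc *ᵥ f) ⬝ᵥ (Jc *ᵥ (Mc *ᵥ h)) = f ⬝ᵥ (Jc *ᵥ h) := by
    intro f h
    rw [aux_dot_conj, hJcMc]
  have habs1 : ‖μ‖ ≠ 1 := habs
  have hμμ : μ * μ ≠ 1 := by
    intro h
    apply habs1
    have : ‖μ‖ * ‖μ‖ = 1 := by
      rw [← norm_mul, h, norm_one]
    rcases mul_self_eq_one_iff.mp this with h' | h'
    · exact h'
    · linarith [norm_nonneg μ, h']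
  have hμconj : (starRingEnd ℂ) μ * μ ≠ 1 := by
    intro h
    apply habs1
    have h2 : μ * (starRingEnd ℂ) μ = 1 := by rw [mul_comm]; exact h
    rw [Complex.mul_conj] at h2
    have h3 : Complex.normSq μ = 1 := by exact_mod_cast h2
    rw [← Complex.sq_norm] at h3
    nlinarith [norm_nonneg μ]
  have hBcww : w ⬝ᵥ (Jc *ᵥ w) = 0 := by
    have h := hBcM w w
    rw [hMcw] at h
    rw [Matrix.mulVec_smul, smul_dotProduct, dotProduct_smul,
      smul_eq_mul, smul_eq_mul, ← mul_assoc] at h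
    have : (μ * μ - 1) * (w ⬝ᵥ (Jc *ᵥ w)) = 0 := by linear_combination h
    rcases mul_eq_zero.mp this with h' | h'
    · exact absurd (by linear_combination h' : μ * μ = 1) hμμ
    · exact h'
  set ws : Fin r → ℂ := fun i => (starRingEnd ℂ) (w i) with hws
  have hMcws : Mc *ᵥ ws = ((starRingEnd ℂ) μ) • ws := by
    funext i
    have h := congrFun hMcw i
    have hconj := congrArg (starRingEnd ℂ) h
    have lhs : (starRingEnd ℂ) ((Mc *ᵥ w) i) = (Mc *ᵥ ws) i := by
      simp only [Matrix.mulVec, dotProduct, map_sum, _root_.map_mul, hws]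
      refine Finset.sum_congr rfl fun j _ => ?_
      congr 1
      rw [hMc]
      simp only [Matrix.map_apply]
      exact Complex.conj_ofReal _
    rw [lhs] at hconj
    rw [hconj]
    simp [hws]
  have hBcwws : w ⬝ᵥ (Jc *ᵥ ws) = 0 := by
    have h := hBcM w ws
    rw [hMcw, hMcws] at h
    rw [Matrix.mulVec_smul, smul_dotProduct, dotProduct_smul,
      smul_eq_mul, smul_eq_mul, ← mul_assoc] at h
    have : (μ * (starRingEnd ℂ) μ - 1) * (w ⬝ᵥ (Jc *ᵥ ws)) = 0 := by linear_combination h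
    rcases mul_eq_zero.mp this with h' | h'
    · exact absurd (by linear_combination h' : (starRingEnd ℂ) μ * μ = 1) hμconj
    · exact h'
  -- real and imaginary parts
  set u : Fin r → ℝ := fun i => (w i).re with hu
  set vv : Fin r → ℝ := fun i => (w i).im with hvv
  have hexp1 : w ⬝ᵥ (Jc *ᵥ w) = ∑ i, εc i * (w i * w i) := aux_dot_diag εc w w
  have hexp2 : w ⬝ᵥ (Jc *ᵥ ws) = ∑ i, εc i * (w i * ws i) := aux_dot_diag εc w ws
  have hre1 : ∑ i, ε i * (u i * u i) - ∑ i, ε i * (vv i * vv i) = 0 := by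
    have := congrArg Complex.re (hexp1 ▸ hBcww)
    rw [Complex.re_sum] at this
    rw [← Finset.sum_sub_distrib]
    rw [show (0:ℂ).re = 0 from rfl] at this
    rw [← this]
    refine Finset.sum_congr rfl fun i _ => ?_
    rw [hεc]
    simp only [Complex.mul_re, Complex.ofReal_re, Complex.ofReal_im, Complex.mul_im]
    rw [hu, hvv]
    ring
  have him1 : ∑ i, ε i * (u i * vv i) = 0 := by
    have := congrArg Complex.im (hexp1 ▸ hBcww)
    rw [Complex.im_sum] at this
    rw [show (0:ℂ).im = 0 from rfl] at this
    have h2 : ∑ i, (2 : ℝ) * (ε i * (u i * vv i)) = 0 := by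
      rw [← this]
      refine Finset.sum_congr rfl fun i _ => ?_
      rw [hεc]
      simp only [Complex.mul_im, Complex.mul_re, Complex.ofReal_re, Complex.ofReal_im]
      rw [hu, hvv]
      ring
    rw [← Finset.mul_sum] at h2
    have := mul_eq_zero.mp h2
    rcases this with h' | h'
    · norm_num at h'
    · exact h'
  have hre2 : ∑ i, ε i * (u i * u i) + ∑ i, ε i * (vv i * vv i) = 0 := by
    have := congrArg Complex.re (hexp2 ▸ hBcwws)
    rw [Complex.re_sum] at this
    rw [show (0:ℂ).re = 0 from rfl] at this
    rw [← Finset.sum_add_distrib, ← this]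
    refine Finset.sum_congr rfl fun i _ => ?_
    rw [hεc, hws]
    simp only [Complex.mul_re, Complex.ofReal_re, Complex.ofReal_im, Complex.conj_re,
      Complex.conj_im, Complex.mul_im]
    rw [hu, hvv]
    ring
  have hΦuu : ∑ i, ε i * (u i * u i) = 0 := by linarith
  have hΦvv : ∑ i, ε i * (vv i * vv i) = 0 := by linarith
  -- reduce to a real eigenvector
  have hwre : ∀ i, w i = (u i : ℂ) + (vv i : ℂ) * Complex.I := by
    intro i
    simp only [hu, hvv]
    exact (Complex.re_add_im (w i)).symm
  have hyz : ∃ (y : Fin r → ℝ) (z : ℂ), z ≠ 0 ∧ y ≠ 0 ∧ ∀ i, w i = z * (y i : ℂ) := by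
    by_cases hv0 : vv = 0
    · refine ⟨u, 1, one_ne_zero, ?_, ?_⟩
      · intro h'
        apply hw0
        funext i
        have h1 : u i = 0 := by simpa using congrFun h' i
        have h2 : vv i = 0 := by simpa using congrFun hv0 i
        rw [hwre i, h1, h2]
        simp
      · intro i
        have h2 : vv i = 0 := by simpa using congrFun hv0 i
        rw [hwre i, h2]
        simp
    · rcases aux_phi_dep i0 ε hεval u vv hΦuu hΦvv him1 with h | ⟨c, hc⟩
      · exact absurd h hv0
      · refine ⟨vv, (c : ℂ) + Complex.I, ?_, hv0, ?_⟩
        · intro h'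
          have h2 := congrArg Complex.im h'
          simp at h2
        · intro i
          have hui : u i = c * vv i := by
            rw [hc]; simp
          rw [hwre i, hui]
          push_cast
          ring
  obtain ⟨y, z, hz0', hy0', hwzy⟩ := hyz
  have hMy : ∀ i, (((M *ᵥ y) i : ℝ) : ℂ) = μ * (y i : ℂ) := by
    intro i
    have h := congrFun hMcw i
    have lhs : (Mc *ᵥ w) i = z * (((M *ᵥ y) i : ℝ) : ℂ) := by
      simp only [Matrix.mulVec, dotProduct]
      push_cast
      rw [Finset.mul_sum]
      refine Finset.sum_congr rfl fun j _ => ?_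
      rw [hwzy j, hMc]
      simp only [Matrix.map_apply, Complex.coe_algebraMap]
      push_cast
      ring
    rw [lhs] at h
    have rhs : (μ • w) i = z * (μ * (y i : ℂ)) := by
      rw [Pi.smul_apply, smul_eq_mul, hwzy i]
      ring
    rw [rhs] at h
    exact mul_left_cancel₀ hz0' h
  obtain ⟨i₁, hi₁⟩ : ∃ i, y i ≠ 0 := by
    by_contra h
    push_neg at h
    exact hy0' (funext h)
  set t : ℝ := (M *ᵥ y) i₁ / y i₁ with htdef
  have hμt : μ = (t : ℂ) := by
    have h := hMy i₁
    have hyi : ((y i₁ : ℝ) : ℂ) ≠ 0 := Complex.ofReal_ne_zero.mpr hi₁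
    rw [htdef, Complex.ofReal_div, eq_div_iff hyi]
    exact h.symm
  have hMyt : M *ᵥ y = t • y := by
    funext i
    have := hMy i
    rw [hμt] at this
    have h2 : (((M *ᵥ y) i : ℝ) : ℂ) = ((t * y i : ℝ) : ℂ) := by
      rw [this]; push_cast; ring
    have := Complex.ofReal_inj.mp h2
    rw [this]
    rfl
  have habst : ‖μ‖ = |t| := by rw [hμt, Complex.norm_real, Real.norm_eq_abs]
  have ht2 : t * t ≠ 1 := by
    intro h
    apply habs1
    rw [habst]
    rcases mul_self_eq_one_iff.mp h with h' | h' <;> rw [h'] <;> norm_num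
  have htlam : t ≠ lam := by
    intro h
    exact hμ1 (by rw [hμt, h])
  have htlaminv : t ≠ lam⁻¹ := by
    intro h
    apply hμ2
    rw [hμt, h, Complex.ofReal_inv]
  -- final contradiction via the real form
  have hΦsmul : ∀ (a b : ℝ) (f h : Fin r → ℝ),
      ∑ i, ε i * ((a • f) i * (b • h) i) = (a * b) * ∑ i, ε i * (f i * h i) := by
    intro a b f h
    rw [Finset.mul_sum]
    refine Finset.sum_congr rfl fun i _ => ?_
    simp only [Pi.smul_apply, smul_eq_mul]
    ring
  have hΦM' : ∀ f h : Fin r → ℝ,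
      ∑ i, ε i * ((M *ᵥ f) i * (M *ᵥ h) i) = ∑ i, ε i * (f i * h i) := by
    intro f h
    have := hΦM f h
    rw [hJ, aux_dot_diag, aux_dot_diag] at this
    exact this
  have hΦxx : ∑ i, ε i * (x i * x i) = 0 := by
    have h := hΦM' x x
    rw [hMx, hΦsmul] at h
    have : (lam * lam - 1) * ∑ i, ε i * (x i * x i) = 0 := by linarith
    rcases mul_eq_zero.mp this with h' | h'
    · exact absurd (by linarith : lam * lam = 1) hlamsq
    · exact h'
  have hΦyy : ∑ i, ε i * (y i * y i) = 0 := by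
    have h := hΦM' y y
    rw [hMyt, hΦsmul] at h
    have : (t * t - 1) * ∑ i, ε i * (y i * y i) = 0 := by linarith
    rcases mul_eq_zero.mp this with h' | h'
    · exact absurd (by linarith : t * t = 1) ht2
    · exact h'
  have hlamt : lam * t ≠ 1 := by
    intro h
    apply htlaminv
    field_simp
    linarith [h]
  have hΦxy : ∑ i, ε i * (x i * y i) = 0 := by
    have h := hΦM' x y
    rw [hMx, hMyt, hΦsmul] at h
    have : (lam * t - 1) * ∑ i, ε i * (x i * y i) = 0 := by linarith
    rcases mul_eq_zero.mp this with h' | h'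
    · exact absurd (by linarith : lam * t = 1) hlamt
    · exact h'
  rcases aux_phi_dep i0 ε hεval x y hΦxx hΦyy hΦxy with h | ⟨c, hc⟩
  · exact hy0' h
  · have hc0 : c ≠ 0 := by
      intro h'
      apply hx0
      rw [hc, h', zero_smul]
    have h1 : M *ᵥ x = (c * t) • y := by
      rw [hc, Matrix.mulVec_smul, hMyt, smul_smul]
    have h2 : M *ᵥ x = (lam * c) • y := by
      rw [hMx, hc, smul_smul]
    have h3 : c * t = lam * c := by
      have := h1.symm.trans h2
      have h4 := congrFun this i₁
      simp only [Pi.smul_apply, smul_eq_mul] at h4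
      exact mul_right_cancel₀ hi₁ h4
    apply htlam
    have : c * t = c * lam := by linarith [h3]
    field_simp at this
    linarith
end

section
/- Define the hybrid absolute value on ℂ by |0|_hyb = 0 and |c|_hyb = max(1, |c|) for c ≠ 0. Let r, s be real numbers with 0 < s ≤ r < 1, and let t₀ ∈ ℂ with |t₀| = s. Let a : ℤ → ℂ be a function such that a_n = 0 for all n < m for some integer m, and assume ∑_{n∈ℤ} |a_n|_hyb · rⁿ < ∞. Then the series ∑_{n∈ℤ} a_n·t₀ⁿ converges absolutely, and |∑_{n∈ℤ} a_n·t₀ⁿ|^{(log r)/(log s)} ≤ ∑_{n∈ℤ} |a_n|_hyb · rⁿ (with the convention 0^α = 0 for α > 0). -/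
set_option autoImplicit false

/-- The hybrid absolute value on `ℂ`: `|0|_hyb = 0` and `|c|_hyb = max (1, |c|)` for `c ≠ 0`. -/
noncomputable def hybAbs (c : ℂ) : ℝ := if c = 0 then 0 else max 1 ‖c‖

private lemma real_rpow_add_le {p : ℝ} (a b : ℝ) (ha : 0 ≤ a) (hb : 0 ≤ b)
    (hp : 0 ≤ p) (hp1 : p ≤ 1) : (a + b) ^ p ≤ a ^ p + b ^ p := by
  lift a to NNReal using ha
  lift b to NNReal using hb
  have := NNReal.rpow_add_le_add_rpow a b hp hp1
  exact_mod_cast this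

private lemma finset_rpow_sum_le {ι : Type*} {p : ℝ} (hp : 0 < p) (hp1 : p ≤ 1)
    (x : ι → ℝ) (hx : ∀ i, 0 ≤ x i) (s : Finset ι) :
    (∑ i ∈ s, x i) ^ p ≤ ∑ i ∈ s, x i ^ p := by
  classical
  induction s using Finset.induction with
  | empty => simp [Real.zero_rpow hp.ne']
  | @insert a s hi ih =>
      rw [Finset.sum_insert hi, Finset.sum_insert hi]
      calc (x a + ∑ i ∈ s, x i) ^ p ≤ x a ^ p + (∑ i ∈ s, x i) ^ p :=
            real_rpow_add_le _ _ (hx a) (Finset.sum_nonneg fun i _ => hx i) hp.le hp1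
        _ ≤ x a ^ p + ∑ i ∈ s, x i ^ p := by gcongr

private lemma rpow_tsum_le {ι : Type*} {p : ℝ} (hp : 0 < p) (hp1 : p ≤ 1)
    (x : ι → ℝ) (hx0 : ∀ i, 0 ≤ x i) (hx : Summable x)
    (hxp : Summable (fun i => x i ^ p)) :
    (∑' i, x i) ^ p ≤ ∑' i, x i ^ p := by
  have h1 : Filter.Tendsto (fun s : Finset ι => (∑ i ∈ s, x i) ^ p) Filter.atTop
      (nhds ((∑' i, x i) ^ p)) := by
    have hc : ContinuousAt (fun y : ℝ => y ^ p) (∑' i, x i) :=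
      Real.continuousAt_rpow_const _ _ (Or.inr hp.le)
    exact hc.tendsto.comp hx.hasSum
  refine le_of_tendsto h1 (Filter.Eventually.of_forall fun s => ?_)
  calc (∑ i ∈ s, x i) ^ p ≤ ∑ i ∈ s, x i ^ p := finset_rpow_sum_le hp hp1 x hx0 s
    _ ≤ ∑' i, x i ^ p := Summable.sum_le_tsum s (fun i _ => Real.rpow_nonneg (hx0 i) p) hxp

/-- **The seminorm `τ(t₀)` is bounded by the hybrid norm `‖·‖_{hyb,r}`.** For a Laurent series
`f = ∑ aₙ tⁿ` with `∑ |aₙ|_hyb rⁿ < ∞` and a point `t₀` with `0 < |t₀| = s ≤ r < 1`, the series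
`∑ aₙ t₀ⁿ` converges absolutely and `|f(t₀)|^{log r / log s} ≤ ∑ |aₙ|_hyb rⁿ`. -/
theorem stmt9 (r s : ℝ) (hs : 0 < s) (hsr : s ≤ r) (hr : r < 1)
    (t₀ : ℂ) (ht₀ : ‖t₀‖ = s)
    (a : ℤ → ℂ) (m : ℤ) (hvanish : ∀ n : ℤ, n < m → a n = 0)
    (hsum : Summable (fun n : ℤ => hybAbs (a n) * r ^ n)) :
    Summable (fun n : ℤ => ‖a n * t₀ ^ n‖) ∧
    ‖∑' n : ℤ, a n * t₀ ^ n‖ ^ (Real.log r / Real.log s)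
      ≤ ∑' n : ℤ, hybAbs (a n) * r ^ n := by
  set α : ℝ := Real.log r / Real.log s with hα
  have hr0 : 0 < r := lt_of_lt_of_le hs hsr
  have hs1 : s < 1 := lt_of_le_of_lt hsr hr
  have hlogs : Real.log s < 0 := Real.log_neg hs hs1
  have hlogr : Real.log r < 0 := Real.log_neg hr0 hr
  have hα0 : 0 < α := div_pos_of_neg_of_neg hlogr hlogs
  have hα1 : α ≤ 1 := by
    rw [hα, div_le_one_of_neg hlogs]
    exact Real.log_le_log hs hsr
  -- `s ^ α = r`
  have hsα : s ^ α = r := by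
    rw [Real.rpow_def_of_pos hs, hα, mul_comm, div_mul_cancel₀ _ hlogs.ne, Real.exp_log hr0]
  -- g n : the hybrid terms; they are nonnegative
  set g : ℤ → ℝ := fun n => hybAbs (a n) * r ^ n with hg
  have hg0 : ∀ n, 0 ≤ g n := by
    intro n
    have h1 : 0 ≤ hybAbs (a n) := by
      unfold hybAbs
      split
      · exact le_refl 0
      · exact le_trans zero_le_one (le_max_left _ _)
    simpa [hg] using mul_nonneg h1 (zpow_pos hr0 n).le
  -- norm of the terms
  have hnorm : ∀ n : ℤ, ‖a n * t₀ ^ n‖ = ‖a n‖ * s ^ n := by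
    intro n
    rw [norm_mul, norm_zpow, ht₀]
  have hnorm0 : ∀ n : ℤ, 0 ≤ ‖a n * t₀ ^ n‖ := fun n => norm_nonneg _
  -- pointwise key inequality : ‖a n * t₀ ^ n‖ ^ α ≤ g n
  have hkey : ∀ n : ℤ, ‖a n * t₀ ^ n‖ ^ α ≤ g n := by
    intro n
    rw [hnorm n]
    have hsn : (0:ℝ) ≤ s ^ n := (zpow_pos hs n).le
    rw [Real.mul_rpow (norm_nonneg _) hsn]
    have hszpow : (s ^ n : ℝ) ^ α = r ^ n := by
      rw [← Real.rpow_intCast s n, ← Real.rpow_mul hs.le, mul_comm, Real.rpow_mul hs.le,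
        hsα, Real.rpow_intCast]
    rw [hszpow, hg]
    have habs : ‖a n‖ ^ α ≤ hybAbs (a n) := by
      unfold hybAbs
      by_cases h : a n = 0
      · simp [h, Real.zero_rpow hα0.ne']
      · rw [if_neg h]
        rcases le_total (‖a n‖) 1 with h1 | h1
        · exact le_trans (Real.rpow_le_one (norm_nonneg _) h1 hα0.le) (le_max_left _ _)
        · calc ‖a n‖ ^ α ≤ ‖a n‖ ^ (1:ℝ) :=
                Real.rpow_le_rpow_of_exponent_le h1 hα1
            _ = ‖a n‖ := Real.rpow_one _
            _ ≤ max 1 (‖a n‖) := le_max_right _ _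
    exact mul_le_mul_of_nonneg_right habs (zpow_pos hr0 n).le
  -- bound on g, used to compare the series
  set M : ℝ := max 1 (∑' n, g n) with hM
  have hM1 : (1:ℝ) ≤ M := le_max_left _ _
  have hgM : ∀ n, g n ≤ M := fun n =>
    le_trans (Summable.le_tsum hsum n fun i _ => hg0 i) (le_max_right _ _)
  have hinv : (1:ℝ) ≤ 1 / α := one_le_one_div hα0 hα1
  set K : ℝ := M ^ (1/α - 1) with hK
  have hK0 : 0 ≤ K := Real.rpow_nonneg (le_trans zero_le_one hM1) _
  -- ‖a n * t₀ ^ n‖ ≤ K * g n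
  have hcomp : ∀ n : ℤ, ‖a n * t₀ ^ n‖ ≤ K * g n := by
    intro n
    have h1 : ‖a n * t₀ ^ n‖ = (‖a n * t₀ ^ n‖ ^ α) ^ (1/α) := by
      rw [← Real.rpow_mul (hnorm0 n), mul_one_div, div_self hα0.ne', Real.rpow_one]
    rw [h1]
    calc (‖a n * t₀ ^ n‖ ^ α) ^ (1/α) ≤ (g n) ^ (1/α) :=
          Real.rpow_le_rpow (Real.rpow_nonneg (hnorm0 n) _) (hkey n) (by positivity)
      _ ≤ K * g n := by
          rcases eq_or_lt_of_le (hg0 n) with h0 | h0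
          · rw [← h0, Real.zero_rpow (by positivity), mul_zero]
          · have hexp : (1/α - 1) + 1 = 1/α := by ring
            have h2 : (g n) ^ (1/α) = (g n) ^ (1/α - 1) * g n := by
              calc (g n) ^ (1/α) = (g n) ^ ((1/α - 1) + 1) := by rw [hexp]
                _ = (g n) ^ (1/α - 1) * (g n) ^ (1:ℝ) := Real.rpow_add h0 _ _
                _ = (g n) ^ (1/α - 1) * g n := by rw [Real.rpow_one]
            rw [h2]
            apply mul_le_mul_of_nonneg_right _ (hg0 n)
            exact Real.rpow_le_rpow (hg0 n) (hgM n) (by linarith)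
  have hsummable : Summable (fun n : ℤ => ‖a n * t₀ ^ n‖) :=
    Summable.of_nonneg_of_le hnorm0 hcomp (hsum.mul_left K)
  refine ⟨hsummable, ?_⟩
  -- summability of the α-powers
  have hsumα : Summable (fun n : ℤ => ‖a n * t₀ ^ n‖ ^ α) :=
    Summable.of_nonneg_of_le (fun n => Real.rpow_nonneg (hnorm0 n) _) hkey hsum
  calc ‖∑' n : ℤ, a n * t₀ ^ n‖ ^ α
      ≤ (∑' n : ℤ, ‖a n * t₀ ^ n‖) ^ α := by
        apply Real.rpow_le_rpow (norm_nonneg _) _ hα0.le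
        exact norm_tsum_le_tsum_norm hsummable
    _ ≤ ∑' n : ℤ, ‖a n * t₀ ^ n‖ ^ α := rpow_tsum_le hα0 hα1 _ hnorm0 hsummable hsumα
    _ ≤ ∑' n : ℤ, g n := Summable.tsum_le_tsum hkey hsumα hsum
end

section
/- Define the hybrid absolute value on ℂ by |0|_hyb = 0 and |c|_hyb = max(1, |c|) for c ≠ 0, and fix a real number r with 0 < r < 1. Let a, b : ℤ → ℂ be functions with a_n = 0 for n < m and b_n = 0 for n < m′ for some integers m, m′, and assume ‖a‖ := ∑_{n∈ℤ} |a_n|_hyb·rⁿ < ∞ and ‖b‖ := ∑_{n∈ℤ} |b_n|_hyb·rⁿ < ∞. Let c : ℤ → ℂ be the convolution c_n = ∑_{i+j=n} a_i·b_j (the coefficient sequence of the product of the corresponding Laurent series). Then ∑_{n∈ℤ} |c_n|_hyb·rⁿ ≤ ‖a‖·‖b‖. -/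
set_option autoImplicit false

lemma hybAbs_nonneg (x : ℂ) : 0 ≤ hybAbs x := by
  unfold hybAbs
  split
  · exact le_refl 0
  · exact le_trans zero_le_one (le_max_left _ _)

lemma hybAbs_zero : hybAbs 0 = 0 := by simp [hybAbs]

lemma hybAbs_mul_le (x y : ℂ) : hybAbs (x * y) ≤ hybAbs x * hybAbs y := by
  by_cases hx : x = 0
  · simp [hx, hybAbs_zero]
  by_cases hy : y = 0
  · simp [hy, hybAbs_zero]
  have hxy : x * y ≠ 0 := mul_ne_zero hx hy
  simp only [hybAbs, if_neg hx, if_neg hy, if_neg hxy]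
  refine max_le ?_ ?_
  · exact one_le_mul_of_one_le_of_one_le (le_max_left _ _) (le_max_left _ _)
  · rw [norm_mul]
    exact mul_le_mul (le_max_right _ _) (le_max_right _ _) (norm_nonneg _)
      (le_trans zero_le_one (le_max_left _ _))

lemma hybAbs_add_le (x y : ℂ) : hybAbs (x + y) ≤ hybAbs x + hybAbs y := by
  by_cases hx : x = 0
  · simp [hx, hybAbs_zero]
  by_cases hy : y = 0
  · simp [hy, hybAbs_zero]
  by_cases hxy : x + y = 0
  · rw [hxy, hybAbs_zero]
    exact add_nonneg (hybAbs_nonneg x) (hybAbs_nonneg y)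
  simp only [hybAbs, if_neg hx, if_neg hy, if_neg hxy]
  refine max_le ?_ ?_
  · exact le_add_of_le_of_nonneg (le_max_left _ _)
      (le_trans zero_le_one (le_max_left _ _))
  · exact le_trans (norm_add_le x y)
      (add_le_add (le_max_right _ _) (le_max_right _ _))

lemma hybAbs_sum_le (s : Finset ℤ) (f : ℤ → ℂ) :
    hybAbs (∑ i ∈ s, f i) ≤ ∑ i ∈ s, hybAbs (f i) := by
  classical
  induction s using Finset.induction_on with
  | empty => simp [hybAbs_zero]
  | insert x s h ih =>
    rw [Finset.sum_insert h, Finset.sum_insert h]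
    exact le_trans (hybAbs_add_le _ _) (add_le_add_right ih _)

/-- **Submultiplicativity of the hybrid norm `‖·‖_{hyb,r}`.** If `a` and `b` are coefficient
sequences of Laurent series with finite hybrid norm and `c` is their convolution
(`cₙ = ∑_{i+j=n} aᵢ bⱼ`), then `∑ |cₙ|_hyb rⁿ ≤ (∑ |aₙ|_hyb rⁿ) · (∑ |bₙ|_hyb rⁿ)`. -/
theorem stmt10 (r : ℝ) (hr0 : 0 < r) (hr1 : r < 1)
    (a b : ℤ → ℂ) (m m' : ℤ)
    (hva : ∀ n : ℤ, n < m → a n = 0) (hvb : ∀ n : ℤ, n < m' → b n = 0)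
    (hsa : Summable (fun n : ℤ => hybAbs (a n) * r ^ n))
    (hsb : Summable (fun n : ℤ => hybAbs (b n) * r ^ n))
    (c : ℤ → ℂ) (hc : ∀ n : ℤ, c n = ∑' i : ℤ, a i * b (n - i)) :
    Summable (fun n : ℤ => hybAbs (c n) * r ^ n) ∧
    ∑' n : ℤ, hybAbs (c n) * r ^ n ≤
      (∑' n : ℤ, hybAbs (a n) * r ^ n) * (∑' n : ℤ, hybAbs (b n) * r ^ n) := by
  set A : ℤ → ℝ := fun n => hybAbs (a n) * r ^ n with hA
  set B : ℤ → ℝ := fun n => hybAbs (b n) * r ^ n with hB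
  have hrpos : ∀ n : ℤ, (0:ℝ) < r ^ n := fun n => zpow_pos hr0 n
  have hAnn : ∀ n, 0 ≤ A n := fun n => mul_nonneg (hybAbs_nonneg _) (hrpos n).le
  have hBnn : ∀ n, 0 ≤ B n := fun n => mul_nonneg (hybAbs_nonneg _) (hrpos n).le
  -- summable product
  have hF : Summable (fun p : ℤ × ℤ => A p.1 * B p.2) :=
    hsa.mul_of_nonneg hsb hAnn hBnn
  -- reindex
  let e : ℤ × ℤ ≃ ℤ × ℤ :=
    ⟨fun p => (p.1 + p.2, p.1), fun q => (q.2, q.1 - q.2),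
      fun p => by simp, fun q => by simp⟩
  have hG : Summable (fun q : ℤ × ℤ => A q.2 * B (q.1 - q.2)) := by
    have := (e.symm.summable_iff (f := fun p : ℤ × ℤ => A p.1 * B p.2)).2 hF
    exact this
  have hGts : ∑' q : ℤ × ℤ, A q.2 * B (q.1 - q.2)
      = (∑' n, A n) * (∑' n, B n) := by
    have h1 : ∑' q : ℤ × ℤ, A q.2 * B (q.1 - q.2)
        = ∑' p : ℤ × ℤ, A p.1 * B p.2 :=
      e.symm.tsum_eq (f := fun p : ℤ × ℤ => A p.1 * B p.2)
    rw [h1, ← Summable.tsum_mul_tsum hsa hsb hF]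
  -- the fiberwise sums
  set S : ℤ → ℝ := fun n => ∑' i : ℤ, A i * B (n - i) with hSdef
  have hSin : ∀ n : ℤ, Summable (fun i : ℤ => A i * B (n - i)) := fun n =>
    hG.prod_factor n
  have hShs : HasSum S (∑' q : ℤ × ℤ, A q.2 * B (q.1 - q.2)) :=
    HasSum.prod_fiberwise hG.hasSum (fun n => (hSin n).hasSum)
  have hSnn : ∀ n, 0 ≤ S n := fun n =>
    tsum_nonneg (fun i => mul_nonneg (hAnn i) (hBnn _))
  -- pointwise bound
  have key : ∀ n : ℤ, hybAbs (c n) * r ^ n ≤ S n := by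
    intro n
    have hfin : c n = ∑ i ∈ Finset.Icc m (n - m'), a i * b (n - i) := by
      rw [hc n]
      refine tsum_eq_sum ?_
      intro i hi
      rw [Finset.mem_Icc, not_and_or] at hi
      rcases hi with hi | hi
      · rw [hva i (lt_of_not_ge hi), zero_mul]
      · rw [hvb (n - i) (by omega), mul_zero]
    have h1 : hybAbs (c n) ≤ ∑ i ∈ Finset.Icc m (n - m'),
        hybAbs (a i) * hybAbs (b (n - i)) := by
      rw [hfin]
      refine le_trans (hybAbs_sum_le _ _) (Finset.sum_le_sum fun i _ => ?_)
      exact hybAbs_mul_le _ _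
    have h2 : hybAbs (c n) * r ^ n ≤ ∑ i ∈ Finset.Icc m (n - m'),
        A i * B (n - i) := by
      calc hybAbs (c n) * r ^ n
          ≤ (∑ i ∈ Finset.Icc m (n - m'), hybAbs (a i) * hybAbs (b (n - i))) * r ^ n :=
            mul_le_mul_of_nonneg_right h1 (hrpos n).le
        _ = ∑ i ∈ Finset.Icc m (n - m'), A i * B (n - i) := by
            rw [Finset.sum_mul]
            refine Finset.sum_congr rfl fun i _ => ?_
            simp only [hA, hB]
            have hn : i + (n - i) = n := by omega
            rw [← hn, zpow_add₀ hr0.ne']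
            ring
    exact le_trans h2 (Summable.sum_le_tsum _ (fun i _ => mul_nonneg (hAnn i) (hBnn _)) (hSin n))
  have hnn : ∀ n : ℤ, 0 ≤ hybAbs (c n) * r ^ n := fun n =>
    mul_nonneg (hybAbs_nonneg _) (hrpos n).le
  have hsum : Summable (fun n : ℤ => hybAbs (c n) * r ^ n) :=
    Summable.of_nonneg_of_le hnn key hShs.summable
  refine ⟨hsum, ?_⟩
  calc ∑' n : ℤ, hybAbs (c n) * r ^ n ≤ ∑' n, S n :=
        Summable.tsum_le_tsum key hsum hShs.summable
    _ = (∑' n, A n) * (∑' n, B n) := by rw [hShs.tsum_eq, hGts]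
end
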